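/- Let X be a tree sum of spaces (X_i)_{i∈I}, with retractions q_i : X → X_i, and Y ⊆ X. The following are equivalent: (i) Y is a tree subsum of X (i.e., Y is an inner tree sum of the family (Y ∩ X_i)); (ii) the induced subgraph G_Y of the gluing graph is connected; (iii) q_i[Y] = Y ∩ X_i for every i with Y ∩ X_i ≠ ∅. -/

import Mathlib

/-- The set of gluing points of a family of subspaces: points lying in at least two
of the subspaces. -/
def gluingPoints {X I : Type*} (F : I → Set X) : Set X :=
  {x | ∃ i j : I, i ≠ j ∧ x ∈ F i ∧ x ∈ F j}

/-- The (bipartite) gluing graph of a family of subspaces: vertices are the indices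
together with the gluing points, with an edge between `i` and a gluing point `s`
iff `s ∈ F i`. -/
def gluingGraph {X I : Type*} (F : I → Set X) :
    SimpleGraph (I ⊕ ↥(gluingPoints F)) :=
  SimpleGraph.fromRel (fun a b =>
    ∃ (i : I) (s : ↥(gluingPoints F)), a = Sum.inl i ∧ b = Sum.inr s ∧ (s : X) ∈ F i)

/-- `X` is an (inner) tree sum of the family `F` of its subspaces: the subspaces
cover `X`, `X` carries the final topology with respect to the inclusions, and the
gluing graph is a tree. -/
def IsTreeSumOf {X I : Type*} [TopologicalSpace X] (F : I → Set X) : Prop :=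
  (∀ x : X, ∃ i, x ∈ F i) ∧
  (∀ U : Set X, IsOpen U ↔ ∀ i, IsOpen ((fun y : F i => (y : X)) ⁻¹' U)) ∧
  (gluingGraph F).IsTree

namespace Stmt12
open SimpleGraph Sum Set Function

set_option linter.unusedSectionVars false

variable {X I : Type*} [TopologicalSpace X] {F : I → Set X}

lemma adj_inl_inr {i : I} {s : ↥(gluingPoints F)} (hs : (s : X) ∈ F i) :
    (gluingGraph F).Adj (inl i) (inr s) :=
  SimpleGraph.fromRel_adj _ _ _ |>.mpr ⟨by simp, Or.inl ⟨i, s, rfl, rfl, hs⟩⟩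

lemma adj_cases {a b : I ⊕ ↥(gluingPoints F)} (hab : (gluingGraph F).Adj a b) :
    ∃ (i : I) (s : ↥(gluingPoints F)), (s : X) ∈ F i ∧
      ((a = inl i ∧ b = inr s) ∨ (a = inr s ∧ b = inl i)) := by
  rw [gluingGraph, SimpleGraph.fromRel_adj] at hab
  obtain ⟨-, h | h⟩ := hab
  · obtain ⟨i, s, rfl, rfl, hs⟩ := h; exact ⟨i, s, hs, Or.inl ⟨rfl, rfl⟩⟩
  · obtain ⟨i, s, rfl, rfl, hs⟩ := h; exact ⟨i, s, hs, Or.inr ⟨rfl, rfl⟩⟩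

/-- the set of points "carried" by a vertex of the gluing graph -/
def carrier (F : I → Set X) : (I ⊕ ↥(gluingPoints F)) → Set X :=
  Sum.elim F (fun s => {(s : X)})

section q
variable (q : ∀ i : I, X → F i)
  (hq : ∀ i : I, (∀ y : F i, q i (y : X) = y) ∧
      ∀ j : I, j ≠ i → ∃ c : F i, ∀ y : F j, q i (y : X) = c)

include hq

lemma q_eq_self {i : I} {x : X} (hx : x ∈ F i) : ((q i x : X)) = x := by
  have := (hq i).1 ⟨x, hx⟩
  simp only [this]

lemma q_const {i j : I} (hij : j ≠ i) {x y : X} (hx : x ∈ F j) (hy : y ∈ F j) :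
    q i x = q i y := by
  obtain ⟨c, hc⟩ := (hq i).2 j hij
  have h1 := hc ⟨x, hx⟩
  have h2 := hc ⟨y, hy⟩
  simp only [h1, h2]

/-- Propagation of the value of `q i` along a walk avoiding `inl i`. -/
lemma prop_along {i : I} : ∀ {u v : I ⊕ ↥(gluingPoints F)} (p : (gluingGraph F).Walk u v),
    inl i ∉ p.support → ∀ {x y : X}, x ∈ carrier F u → y ∈ carrier F v → q i x = q i y := by
  intro u v p
  induction p with
  | nil =>
    rename_i w
    intro hsup x y hx hy
    cases w with
    | inl j =>
      have hij : j ≠ i := by rintro rfl; exact hsup (by simp)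
      exact q_const q hq hij hx hy
    | inr s =>
      simp only [carrier, Sum.elim_inr, mem_singleton_iff] at hx hy
      rw [hx, hy]
  | @cons u b v hadj p ih =>
    intro hsup x y hx hy
    have hsup' : inl i ∉ p.support := fun hm => hsup (by simp [hm])
    have hui : u ≠ inl i := fun he => hsup (by simp [he.symm])
    obtain ⟨j, s, hs, hc | hc⟩ := adj_cases hadj
    · obtain ⟨rfl, rfl⟩ := hc
      have hij : j ≠ i := fun he => hui (by rw [he])
      have h1 : q i x = q i (s : X) := q_const q hq hij hx hs
      rw [h1]
      exact ih hsup' (by simp [carrier]) hy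
    · obtain ⟨rfl, rfl⟩ := hc
      simp only [carrier, Sum.elim_inr, mem_singleton_iff] at hx
      subst hx
      exact ih hsup' (by simpa [carrier] using hs) hy

end q

end Stmt12

namespace Stmt12
open SimpleGraph Sum Set Function

set_option linter.unusedSectionVars false

variable {X I : Type*} [TopologicalSpace X] {F : I → Set X}

/-- vertex set of the induced graph `G_Y` -/
def VY (F : I → Set X) (Y : Set X) : Set (I ⊕ ↥(gluingPoints F)) :=
  {v | Sum.elim (fun i => (Y ∩ F i).Nonempty) (fun s => (s : X) ∈ Y) v}

/-- the induced graph `G_Y` -/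
abbrev GY (F : I → Set X) (Y : Set X) : SimpleGraph ↥(VY F Y) :=
  (gluingGraph F).induce (VY F Y)

def carrierY (F : I → Set X) (Y : Set X) : (I ⊕ ↥(gluingPoints F)) → Set X :=
  Sum.elim (fun k => F k ∩ Y) (fun s => {(s : X)})

lemma GY_adj {Y : Set X} {u v : I ⊕ ↥(gluingPoints F)} (hu : u ∈ VY F Y) (hv : v ∈ VY F Y)
    (h : (gluingGraph F).Adj u v) : (GY F Y).Adj ⟨u, hu⟩ ⟨v, hv⟩ := h

section q
variable (q : ∀ i : I, X → F i)
  (hq : ∀ i : I, (∀ y : F i, q i (y : X) = y) ∧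
      ∀ j : I, j ≠ i → ∃ c : F i, ∀ y : F j, q i (y : X) = c)
  (Y : Set X)

include hq

lemma memY_along {i : I} :
    ∀ {a b : ↥(VY F Y)} (p : (GY F Y).Walk a b), (b : I ⊕ ↥(gluingPoints F)) = inl i →
      ∀ {x : X}, x ∈ carrierY F Y (a : I ⊕ ↥(gluingPoints F)) → ((q i x : X)) ∈ Y := by
  intro a b p
  induction p with
  | nil =>
    rename_i w
    intro hb x hx
    rw [hb] at hx
    obtain ⟨hxi, hxY⟩ := hx
    rw [q_eq_self q hq hxi]; exact hxY
  | @cons u b' v hadj p ih =>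
    intro hb x hx
    have hadjG : (gluingGraph F).Adj (u : I ⊕ ↥(gluingPoints F)) (b' : I ⊕ ↥(gluingPoints F)) :=
      hadj
    obtain ⟨k, s, hs, hc | hc⟩ := adj_cases hadjG
    · obtain ⟨hu, hb'⟩ := hc
      rw [hu] at hx
      obtain ⟨hxk, hxY⟩ := hx
      by_cases hk : k = i
      · subst hk; rw [q_eq_self q hq hxk]; exact hxY
      · have : q i x = q i (s : X) := q_const q hq hk hxk hs
        rw [this]
        exact ih hb (by rw [hb']; exact rfl)
    · obtain ⟨hu, hb'⟩ := hc
      rw [hu] at hx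
      have hx' : x = (s : X) := hx
      have hxY : (s : X) ∈ Y := by have := u.2; rw [hu] at this; exact this
      rw [hx']
      exact ih hb (by rw [hb']; exact ⟨hs, hxY⟩)

lemma conn_to_iii (h : IsTreeSumOf F) (hconn : (GY F Y).Connected) :
    ∀ i : I, (Y ∩ F i).Nonempty → q i '' Y = {y : F i | (y : X) ∈ Y} := by
  intro i hi
  ext z
  constructor
  · rintro ⟨y, hy, rfl⟩
    obtain ⟨j, hyj⟩ := h.1 y
    have hJj : (Y ∩ F j).Nonempty := ⟨y, hy, hyj⟩
    obtain ⟨p⟩ := hconn.preconnected ⟨inl j, hJj⟩ ⟨inl i, hi⟩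
    exact memY_along q hq Y p rfl ⟨hyj, hy⟩
  · intro hz
    exact ⟨z, hz, (hq i).1 z⟩

lemma iii_to_conn (h : IsTreeSumOf F) (hY : Y.Nonempty)
    (hiii : ∀ i : I, (Y ∩ F i).Nonempty → q i '' Y = {y : F i | (y : X) ∈ Y}) :
    (GY F Y).Connected := by
  obtain ⟨y₀, hy₀⟩ := hY
  obtain ⟨i₀, hi₀⟩ := h.1 y₀
  have hJ₀ : (Y ∩ F i₀).Nonempty := ⟨y₀, hy₀, hi₀⟩
  have key : ∀ n (i : I) (hi : (Y ∩ F i).Nonempty) (p : (gluingGraph F).Walk (inl i) (inl i₀)),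
      p.IsPath → p.length ≤ n → (GY F Y).Reachable ⟨inl i, hi⟩ ⟨inl i₀, hJ₀⟩ := by
    intro n
    induction n with
    | zero =>
      intro i hi p hp hl
      have h0 : (inl i : I ⊕ ↥(gluingPoints F)) = inl i₀ :=
        p.eq_of_length_eq_zero (Nat.le_zero.mp hl)
      cases inl_injective h0
      exact Reachable.refl _
    | succ n ih =>
      intro i hi p hp hl
      by_cases hii : i = i₀
      · cases hii; exact Reachable.refl _
      · cases p with
        | nil => exact absurd rfl hii
        | @cons _ v _ hadj rest =>
          obtain ⟨k, s, hs, hc | hc⟩ := adj_cases hadj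
          swap
          · exact absurd hc.1 (by simp)
          obtain ⟨hik, hv⟩ := hc
          obtain rfl : i = k := inl_injective hik
          subst hv
          have hrest_sup : inl i ∉ rest.support := (Walk.cons_isPath_iff _ _ |>.mp hp).2
          have hqis : q i (s : X) = q i y₀ :=
            prop_along q hq rest hrest_sup (by simp [carrier]) (by simpa [carrier] using hi₀)
          have hsY : (s : X) ∈ Y := by
            have himg : q i y₀ ∈ q i '' Y := ⟨y₀, hy₀, rfl⟩
            rw [hiii i hi] at himg
            have hself : ((q i (s : X) : X)) = (s : X) := q_eq_self q hq hs
            rw [hqis] at hself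
            rwa [← hself]
          cases rest with
          | @cons _ v2 _ hadj2 rest2 =>
            obtain ⟨k2, s2, hs2, hc2 | hc2⟩ := adj_cases hadj2
            · exact absurd hc2.1 (by simp)
            obtain ⟨hss, hv2⟩ := hc2
            obtain rfl : s = s2 := inr_injective hss
            subst hv2
            have hJk2 : (Y ∩ F k2).Nonempty := ⟨(s : X), hsY, hs2⟩
            have hpath2 : rest2.IsPath := (hp.of_cons).of_cons
            have hlen : rest2.length ≤ n := by
              simp only [Walk.length_cons] at hl; omega
            have r1 := ih k2 hJk2 rest2 hpath2 hlen
            have e1 : (GY F Y).Adj ⟨inl i, hi⟩ ⟨inr s, hsY⟩ :=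
              GY_adj hi hsY (adj_inl_inr hs)
            have e2 : (GY F Y).Adj ⟨inr s, hsY⟩ ⟨inl k2, hJk2⟩ :=
              GY_adj hsY hJk2 (adj_inl_inr hs2).symm
            exact e1.reachable.trans (e2.reachable.trans r1)
  have rInl : ∀ (i : I) (hi : (Y ∩ F i).Nonempty),
      (GY F Y).Reachable ⟨inl i, hi⟩ ⟨inl i₀, hJ₀⟩ := by
    intro i hi
    classical
    obtain ⟨w0⟩ := h.2.2.isConnected.preconnected (inl i) (inl i₀)
    exact key _ i hi w0.toPath.1 w0.toPath.2 le_rfl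
  have rAll : ∀ a : ↥(VY F Y), (GY F Y).Reachable a ⟨inl i₀, hJ₀⟩ := by
    rintro ⟨w, hw⟩
    cases w with
    | inl i => exact rInl i hw
    | inr s =>
      have hsY : (s : X) ∈ Y := hw
      obtain ⟨i, j, hij, hsi, hsj⟩ := s.2
      have hJi : (Y ∩ F i).Nonempty := ⟨(s : X), hsY, hsi⟩
      have e : (GY F Y).Adj ⟨inr s, hw⟩ ⟨inl i, hJi⟩ := GY_adj hw hJi (adj_inl_inr hsi).symm
      exact e.reachable.trans (rInl i hJi)
  rw [connected_iff]
  exact ⟨fun a b => (rAll a).trans (rAll b).symm, ⟨⟨inl i₀, hJ₀⟩⟩⟩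

end q
end Stmt12

namespace Stmt12
open SimpleGraph Sum Set Function

set_option linter.unusedSectionVars false

variable {X I : Type*} [TopologicalSpace X] {F : I → Set X}

/-- inclusion hom from the induced graph -/
def inclHom (F : I → Set X) (S : Set (I ⊕ ↥(gluingPoints F))) :
    (gluingGraph F).induce S →g gluingGraph F :=
  ⟨Subtype.val, fun {_ _} h => h⟩

lemma inclHom_injective (F : I → Set X) (S : Set (I ⊕ ↥(gluingPoints F))) :
    Function.Injective (inclHom F S) := Subtype.val_injective

/-- vertex set for the "outside" graph -/
def NV (F : I → Set X) (Y : Set X) : Set (I ⊕ ↥(gluingPoints F)) :=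
  {v | Sum.elim (fun k => ¬(Y ∩ F k).Nonempty) (fun s => (s : X) ∉ Y) v}

abbrev HH (F : I → Set X) (Y : Set X) : SimpleGraph ↥(NV F Y) :=
  (gluingGraph F).induce (NV F Y)

/-- convexity: a point shared by two subspaces meeting `Y` lies in `Y`. -/
lemma conv (h : IsTreeSumOf F) {Y : Set X} (hconn : (GY F Y).Connected)
    {i k : I} (hik : i ≠ k) (hi : (Y ∩ F i).Nonempty) (hk : (Y ∩ F k).Nonempty)
    {x : X} (hxi : x ∈ F i) (hxk : x ∈ F k) : x ∈ Y := by
  classical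
  have hglue : x ∈ gluingPoints F := ⟨i, k, hik, hxi, hxk⟩
  set s : ↥(gluingPoints F) := ⟨x, hglue⟩ with hs
  let p2 : (gluingGraph F).Walk (inl i) (inl k) :=
    Walk.cons (adj_inl_inr (s := s) hxi) (Walk.cons (adj_inl_inr (s := s) hxk).symm Walk.nil)
  have hp2 : p2.IsPath := by
    rw [Walk.isPath_def]
    simp [p2, hik]
  obtain ⟨w⟩ := hconn.preconnected ⟨inl i, hi⟩ ⟨inl k, hk⟩
  let wm : (gluingGraph F).Walk (inl i) (inl k) := w.map (inclHom F (VY F Y))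
  obtain ⟨pp, hpp, hun⟩ := h.2.2.existsUnique_path (inl i) (inl k)
  have e1 : (wm.toPath : (gluingGraph F).Walk (inl i) (inl k)) = pp := hun _ wm.toPath.2
  have e2 : p2 = pp := hun _ hp2
  have hmem : (inr s : I ⊕ ↥(gluingPoints F)) ∈ wm.toPath.1.support := by
    rw [e1, ← e2]; simp [p2]
  have hmem2 : (inr s : I ⊕ ↥(gluingPoints F)) ∈ wm.support :=
    Walk.support_toPath_subset _ hmem
  rw [show wm = w.map (inclHom F (VY F Y)) from rfl] at hmem2
  obtain ⟨a, _, hae⟩ := List.mem_map.mp (cast (congrArg (fun l => (inr s : I ⊕ ↥(gluingPoints F)) ∈ l)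
    (Walk.support_map (inclHom F (VY F Y)) w)) hmem2)
  have ha2 := a.2
  rw [show (inclHom F (VY F Y)) a = (a : I ⊕ ↥(gluingPoints F)) from rfl] at hae
  rw [hae] at ha2
  exact ha2

/-- uniqueness of the attachment point of an outside component. -/
lemma att (h : IsTreeSumOf F) {Y : Set X} (hconn : (GY F Y).Connected)
    {i k : I} (hi : (Y ∩ F i).Nonempty) (hk : (Y ∩ F k).Nonempty)
    {s x : ↥(gluingPoints F)} (hsY : (s : X) ∉ Y) (hxY : (x : X) ∉ Y)
    (hsi : (s : X) ∈ F i) (hxk : (x : X) ∈ F k)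
    (hreach : (HH F Y).Reachable ⟨inr s, hsY⟩ ⟨inr x, hxY⟩) : i = k ∧ s = x := by
  classical
  obtain ⟨wH⟩ := hreach
  let wHm : (gluingGraph F).Walk (inr s) (inr x) := wH.map (inclHom F (NV F Y))
  have hik : i = k := by
    by_contra hik
    obtain ⟨wY⟩ := hconn.preconnected ⟨inl i, hi⟩ ⟨inl k, hk⟩
    let wYm : (gluingGraph F).Walk (inl i) (inl k) := wY.map (inclHom F (VY F Y))
    let pY := wYm.toPath
    let qW : (gluingGraph F).Walk (inl i) (inl k) :=
      Walk.cons (adj_inl_inr hsi) (wHm.concat (adj_inl_inr hxk).symm)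
    let qP := qW.toPath
    obtain ⟨pp, hpp, hun⟩ := h.2.2.existsUnique_path (inl i) (inl k)
    have e1 : (pY : (gluingGraph F).Walk (inl i) (inl k))
        = (qP : (gluingGraph F).Walk (inl i) (inl k)) := by
      rw [hun _ pY.2, hun _ qP.2]
    obtain ⟨v, hadj, tail, hqv⟩ :=
      Walk.exists_eq_cons_of_ne (by simpa using hik)
        (qP : (gluingGraph F).Walk (inl i) (inl k))
    obtain ⟨i', t, ht, hcc | hcc⟩ := adj_cases hadj
    swap
    · exact absurd hcc.1 (by simp)
    obtain ⟨-, rfl⟩ := hcc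
    have hv1 : (inr t : I ⊕ ↥(gluingPoints F))
        ∈ (qP : (gluingGraph F).Walk (inl i) (inl k)).support := by
      rw [hqv, Walk.support_cons]
      exact List.mem_cons_of_mem _ (Walk.start_mem_support tail)
    have hvp : (inr t : I ⊕ ↥(gluingPoints F)) ∈ wYm.support :=
      Walk.support_toPath_subset _ (e1 ▸ hv1)
    have htY : (t : X) ∈ Y := by
      rw [show wYm = wY.map (inclHom F (VY F Y)) from rfl] at hvp
      obtain ⟨a, _, hae⟩ := List.mem_map.mp (cast (congrArg (fun l => (inr t : I ⊕ ↥(gluingPoints F)) ∈ l)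
        (Walk.support_map (inclHom F (VY F Y)) wY)) hvp)
      have ha2 := a.2
      rw [show (inclHom F (VY F Y)) a = (a : I ⊕ ↥(gluingPoints F)) from rfl] at hae
      rw [hae] at ha2
      exact ha2
    have hvq : (inr t : I ⊕ ↥(gluingPoints F)) ∈ qW.support :=
      Walk.support_toPath_subset _ hv1
    have htY' : (t : X) ∉ Y := by
      rw [show qW = Walk.cons (adj_inl_inr hsi) (wHm.concat (adj_inl_inr hxk).symm) from rfl,
        Walk.support_cons] at hvq
      rcases List.mem_cons.mp hvq with hh | hh
      · exact absurd hh.symm (by simp)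
      · rw [Walk.support_concat] at hh
        rcases List.mem_append.mp hh with hh2 | hh2
        · rw [show wHm = wH.map (inclHom F (NV F Y)) from rfl] at hh2
          obtain ⟨a, _, hae⟩ := List.mem_map.mp (cast (congrArg (fun l => (inr t : I ⊕ ↥(gluingPoints F)) ∈ l)
            (Walk.support_map (inclHom F (NV F Y)) wH)) hh2)
          have ha2 := a.2
          rw [show (inclHom F (NV F Y)) a = (a : I ⊕ ↥(gluingPoints F)) from rfl] at hae
          rw [hae] at ha2
          exact ha2
        · exact absurd hh2 (by simp)
    exact htY' htY
  subst hik
  refine ⟨rfl, ?_⟩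
  by_contra hsx
  let p2 : (gluingGraph F).Walk (inr s) (inr x) :=
    Walk.cons (adj_inl_inr hsi).symm (Walk.cons (adj_inl_inr hxk) Walk.nil)
  have hp2 : p2.IsPath := by
    rw [Walk.isPath_def]
    simp [p2, hsx]
  let pH := wHm.toPath
  obtain ⟨pp, hpp, hun⟩ := h.2.2.existsUnique_path (inr s) (inr x)
  have e2 : (pH : (gluingGraph F).Walk (inr s) (inr x)) = p2 := by
    rw [hun _ pH.2, hun _ hp2]
  have hmem : (inl i : I ⊕ ↥(gluingPoints F))
      ∈ (pH : (gluingGraph F).Walk (inr s) (inr x)).support := by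
    rw [e2]; simp [p2]
  have hmem2 : (inl i : I ⊕ ↥(gluingPoints F)) ∈ wHm.support :=
    Walk.support_toPath_subset _ hmem
  rw [show wHm = wH.map (inclHom F (NV F Y)) from rfl] at hmem2
  obtain ⟨a, _, hae⟩ := List.mem_map.mp (cast (congrArg (fun l => (inl i : I ⊕ ↥(gluingPoints F)) ∈ l)
    (Walk.support_map (inclHom F (NV F Y)) wH)) hmem2)
  have ha2 := a.2
  rw [show (inclHom F (NV F Y)) a = (a : I ⊕ ↥(gluingPoints F)) from rfl] at hae
  rw [hae] at ha2
  exact ha2 hi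

end Stmt12

namespace Stmt12
open SimpleGraph Sum Set Function

set_option linter.unusedSectionVars false
set_option maxHeartbeats 1000000

variable {X I : Type*} [TopologicalSpace X] {F : I → Set X}

lemma ind_adj {S : Set (I ⊕ ↥(gluingPoints F))} {u v : I ⊕ ↥(gluingPoints F)}
    (hu : u ∈ S) (hv : v ∈ S) (hadj : (gluingGraph F).Adj u v) :
    ((gluingGraph F).induce S).Adj ⟨u, hu⟩ ⟨v, hv⟩ := hadj

lemma open_of_traces (h : IsTreeSumOf F) {Y : Set X} (hconn : (GY F Y).Connected)
    (U : Set Y)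
    (hU : ∀ p : {i : I // (Y ∩ F i).Nonempty},
      IsOpen ((fun y : ((fun y : Y => (y : X)) ⁻¹' F p.1) => (y : Y)) ⁻¹' U)) :
    IsOpen U := by
  classical
  -- Step 1: choose relatively open witnesses
  have hO : ∀ i : I, (Y ∩ F i).Nonempty → ∃ O : Set X, IsOpen O ∧
      ∀ y : Y, (y : X) ∈ F i → (y ∈ U ↔ (y : X) ∈ O) := by
    intro i hi
    have hop := hU ⟨i, hi⟩
    rw [isOpen_induced_iff] at hop
    obtain ⟨B, hB, hBeq⟩ := hop
    rw [isOpen_induced_iff] at hB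
    obtain ⟨O, hOop, hOeq⟩ := hB
    refine ⟨O, hOop, fun y hy => ?_⟩
    have h1 : (⟨y, hy⟩ : ↥((fun y : Y => (y : X)) ⁻¹' F i)) ∈
        (fun z : ↥((fun y : Y => (y : X)) ⁻¹' F i) => (z : Y)) ⁻¹' U ↔ y ∈ U := Iff.rfl
    rw [← h1, ← hBeq]
    have h2 : (⟨y, hy⟩ : ↥((fun y : Y => (y : X)) ⁻¹' F i)) ∈
        Subtype.val ⁻¹' B ↔ y ∈ B := Iff.rfl
    rw [h2, ← hOeq]
    exact Iff.rfl
  choose Oc hOopen hOiff using hO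
  set Ofun : I → Set X := fun i =>
    if hi : (Y ∩ F i).Nonempty then Oc i hi else ∅ with hOfun
  have hOfun_eq : ∀ i (hi : (Y ∩ F i).Nonempty), Ofun i = Oc i hi := by
    intro i hi; simp [hOfun, hi]
  have hOfun_open : ∀ i, (Y ∩ F i).Nonempty → IsOpen (Ofun i) := by
    intro i hi; rw [hOfun_eq i hi]; exact hOopen i hi
  have hOfun_iff : ∀ i (hi : (Y ∩ F i).Nonempty) (y : Y), (y : X) ∈ F i →
      (y ∈ U ↔ (y : X) ∈ Ofun i) := by
    intro i hi y hy; rw [hOfun_eq i hi]; exact hOiff i hi y hy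
  -- the spreading condition for outside pieces
  set cond : I → Prop := fun j => ∃ (hj : ¬(Y ∩ F j).Nonempty) (i : I)
    (s : ↥(gluingPoints F)) (hi : (Y ∩ F i).Nonempty) (hsY : (s : X) ∉ Y),
      (s : X) ∈ F i ∧ (s : X) ∈ Ofun i ∧
        (HH F Y).Reachable ⟨inr s, hsY⟩ ⟨inl j, hj⟩ with hcond
  set V : Set X := (⋃ i, ⋃ (_ : (Y ∩ F i).Nonempty), Ofun i ∩ F i) ∪
    (⋃ j, ⋃ (_ : cond j), F j) with hV
  -- V ∩ Y = U
  have hVY : ∀ y : Y, ((y : X) ∈ V ↔ y ∈ U) := by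
    intro y
    constructor
    · intro hy
      rcases hy with hy | hy
      · obtain ⟨i, hi, hy1, hy2⟩ := mem_iUnion₂.mp hy
        exact (hOfun_iff i hi y hy2).mpr hy1
      · obtain ⟨j, hj, hy1⟩ := mem_iUnion₂.mp hy
        obtain ⟨hjn, _⟩ := hj
        exact absurd ⟨(y : X), y.2, hy1⟩ hjn
    · intro hy
      obtain ⟨i, hyi⟩ := h.1 (y : X)
      have hi : (Y ∩ F i).Nonempty := ⟨(y : X), y.2, hyi⟩
      exact Or.inl (mem_iUnion₂.mpr ⟨i, hi, (hOfun_iff i hi y hyi).mp hy, hyi⟩)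
  -- V is open
  have hVopen : IsOpen V := by
    rw [(h.2.1 V)]
    intro k
    by_cases hk : (Y ∩ F k).Nonempty
    · -- trace is Ofun k
      have htr : ((fun z : F k => (z : X)) ⁻¹' V) = (fun z : F k => (z : X)) ⁻¹' (Ofun k) := by
        ext z
        constructor
        · intro hz
          rcases hz with hz | hz
          · obtain ⟨i, hi, hz1, hz2⟩ := mem_iUnion₂.mp hz
            by_cases hik : i = k
            · subst hik; exact hz1
            · have hzY : (z : X) ∈ Y := conv h hconn hik hi hk hz2 z.2
              have hzU : (⟨(z : X), hzY⟩ : Y) ∈ U :=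
                (hOfun_iff i hi ⟨(z : X), hzY⟩ hz2).mpr hz1
              exact (hOfun_iff k hk ⟨(z : X), hzY⟩ z.2).mp hzU
          · obtain ⟨j, hj, hz1⟩ := mem_iUnion₂.mp hz
            obtain ⟨hjn, i, s, hi, hsY, hsFi, hsO, hreach⟩ := hj
            have hjk : j ≠ k := fun he => hjn (he ▸ hk)
            have hzY : (z : X) ∉ Y := fun hzy => hjn ⟨(z : X), hzy, hz1⟩
            have hglue : (z : X) ∈ gluingPoints F := ⟨j, k, hjk, hz1, z.2⟩
            have hreach2 : (HH F Y).Reachable ⟨inr s, hsY⟩ ⟨inr ⟨(z : X), hglue⟩, hzY⟩ :=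
              hreach.trans (ind_adj hjn hzY
                (adj_inl_inr (s := ⟨(z : X), hglue⟩) hz1)).reachable
            obtain ⟨hik, hsz⟩ := att h hconn hi hk hsY hzY hsFi z.2 hreach2
            cases hik
            have hzz : (s : X) = (z : X) := congrArg Subtype.val hsz
            rwa [hzz] at hsO
        · intro hz
          exact Or.inl (mem_iUnion₂.mpr ⟨k, hk, hz, z.2⟩)
      rw [htr]
      exact (hOfun_open k hk).preimage continuous_subtype_val
    · by_cases hck : cond k
      · have htr : ((fun z : F k => (z : X)) ⁻¹' V) = univ := by
          ext z
          simp only [mem_univ, iff_true]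
          exact Or.inr (mem_iUnion₂.mpr ⟨k, hck, z.2⟩)
        rw [htr]; exact isOpen_univ
      · have htr : ((fun z : F k => (z : X)) ⁻¹' V) = ∅ := by
          ext z
          simp only [mem_empty_iff_false, iff_false]
          intro hz
          rcases hz with hz | hz
          · obtain ⟨i, hi, hz1, hz2⟩ := mem_iUnion₂.mp hz
            have hik : i ≠ k := fun he => hk (he ▸ hi)
            have hzY : (z : X) ∉ Y := fun hzy => hk ⟨(z : X), hzy, z.2⟩
            have hglue : (z : X) ∈ gluingPoints F := ⟨i, k, hik, hz2, z.2⟩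
            exact hck ⟨hk, i, ⟨(z : X), hglue⟩, hi, hzY, hz2, hz1,
              (ind_adj hzY hk (adj_inl_inr (s := ⟨(z : X), hglue⟩) z.2).symm).reachable⟩
          · obtain ⟨j, hj, hz1⟩ := mem_iUnion₂.mp hz
            obtain ⟨hjn, i, s, hi, hsY, hsFi, hsO, hreach⟩ := hj
            have hjk : j ≠ k := fun he => hck (he ▸ ⟨hjn, i, s, hi, hsY, hsFi, hsO, hreach⟩)
            have hzY : (z : X) ∉ Y := fun hzy => hk ⟨(z : X), hzy, z.2⟩
            have hglue : (z : X) ∈ gluingPoints F := ⟨j, k, hjk, hz1, z.2⟩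
            refine hck ⟨hk, i, s, hi, hsY, hsFi, hsO, ?_⟩
            refine (hreach.trans (ind_adj hjn hzY
              (adj_inl_inr (s := ⟨(z : X), hglue⟩) hz1)).reachable).trans ?_
            exact (ind_adj hzY hk (adj_inl_inr (s := ⟨(z : X), hglue⟩) z.2).symm).reachable
        rw [htr]; exact isOpen_empty
  have hUeq : U = Subtype.val ⁻¹' V := by
    ext y
    rw [mem_preimage]
    exact (hVY y).symm
  rw [hUeq]
  exact hVopen.preimage continuous_subtype_val

end Stmt12

namespace Stmt12
open SimpleGraph Sum Set Function

set_option linter.unusedSectionVars false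

variable {X I : Type*} [TopologicalSpace X]

/-- the restricted family on `Y` -/
def Fsub (F : I → Set X) (Y : Set X) : {i : I // (Y ∩ F i).Nonempty} → Set Y :=
  fun p => ((fun y : Y => (y : X)) ⁻¹' F p.1)

variable (F : I → Set X) (Y : Set X)

def isoFun : ({i : I // (Y ∩ F i).Nonempty} ⊕ ↥(gluingPoints (Fsub F Y))) → ↥(VY F Y)
  | inl p => ⟨inl p.1, p.2⟩
  | inr t => ⟨inr ⟨((t : Y) : X), by
      obtain ⟨p, p', hne, h1, h2⟩ := t.2
      exact ⟨p.1, p'.1, fun he => hne (Subtype.ext he), h1, h2⟩⟩, (t : Y).2⟩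

def isoInv : ↥(VY F Y) → ({i : I // (Y ∩ F i).Nonempty} ⊕ ↥(gluingPoints (Fsub F Y)))
  | ⟨inl i, hi⟩ => inl ⟨i, hi⟩
  | ⟨inr s, hs⟩ => inr ⟨⟨(s : X), hs⟩, by
      obtain ⟨i, j, hij, hsi, hsj⟩ := s.2
      exact ⟨⟨i, ⟨(s : X), hs, hsi⟩⟩, ⟨j, ⟨(s : X), hs, hsj⟩⟩,
        fun he => hij (congrArg Subtype.val he), hsi, hsj⟩⟩

def isoEquiv : ({i : I // (Y ∩ F i).Nonempty} ⊕ ↥(gluingPoints (Fsub F Y))) ≃ ↥(VY F Y) where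
  toFun := isoFun F Y
  invFun := isoInv F Y
  left_inv := by
    rintro (p | t)
    · rfl
    · exact congrArg inr (Subtype.ext (Subtype.ext rfl))
  right_inv := by
    rintro ⟨w, hw⟩
    cases w with
    | inl i => rfl
    | inr s => exact Subtype.ext (congrArg inr (Subtype.ext rfl))

def graphIso : gluingGraph (Fsub F Y) ≃g GY F Y where
  toEquiv := isoEquiv F Y
  map_rel_iff' := by
    intro a b
    constructor
    · intro hab
      have hab' : (gluingGraph F).Adj ((isoFun F Y a) : I ⊕ ↥(gluingPoints F))
          ((isoFun F Y b) : I ⊕ ↥(gluingPoints F)) := hab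
      obtain ⟨i, s, hs, hc | hc⟩ := adj_cases hab'
      · match a, b with
        | inl p, inr t =>
          obtain ⟨h1, h2⟩ := hc
          obtain rfl := inl_injective h1
          obtain rfl := inr_injective h2
          exact SimpleGraph.fromRel_adj _ _ _ |>.mpr
            ⟨by simp, Or.inl ⟨p, t, rfl, rfl, hs⟩⟩
        | inl p, inl p' => exact absurd hc.2 (by simp [isoFun])
        | inr t, inr t' => exact absurd hc.1 (by simp [isoFun])
        | inr t, inl p' => exact absurd hc.1 (by simp [isoFun])
      · match a, b with
        | inr t, inl p =>
          obtain ⟨h2, h1⟩ := hc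
          obtain rfl := inl_injective h1
          obtain rfl := inr_injective h2
          exact SimpleGraph.fromRel_adj _ _ _ |>.mpr
            ⟨by simp, Or.inr ⟨p, t, rfl, rfl, hs⟩⟩
        | inl p, inl p' => exact absurd hc.1 (by simp [isoFun])
        | inr t, inr t' => exact absurd hc.2 (by simp [isoFun])
        | inl p, inr t' => exact absurd hc.2 (by simp [isoFun])
    · intro hab
      obtain ⟨p, t, ht, hc | hc⟩ := adj_cases hab
      · obtain ⟨rfl, rfl⟩ := hc
        show (gluingGraph F).Adj ((isoFun F Y (inl p)) : I ⊕ ↥(gluingPoints F))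
          ((isoFun F Y (inr t)) : I ⊕ ↥(gluingPoints F))
        exact adj_inl_inr ht
      · obtain ⟨rfl, rfl⟩ := hc
        show (gluingGraph F).Adj ((isoFun F Y (inr t)) : I ⊕ ↥(gluingPoints F))
          ((isoFun F Y (inl p)) : I ⊕ ↥(gluingPoints F))
        exact Adj.symm (adj_inl_inr ht)

lemma GY_acyclic (h : IsTreeSumOf F) : (GY F Y).IsAcyclic := by
  intro v c hc
  exact ((isTree_iff _).mp h.2.2).2 _
    ((Walk.map_isCycle_iff_of_injective (inclHom_injective F (VY F Y))).mpr hc)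

lemma Fsub_acyclic (h : IsTreeSumOf F) : (gluingGraph (Fsub F Y)).IsAcyclic := by
  intro v c hc
  exact GY_acyclic F Y h _
    ((Walk.map_isCycle_iff_of_injective (f := (graphIso F Y).toHom)
      (fun a b hab => (graphIso F Y).toEquiv.injective hab)).mpr hc)

end Stmt12


/-- for a tree sum `X` of `(X_i)` with retractions `q_i`, and a nonempty
`Y ⊆ X`, the following are equivalent: (i) `Y` is a tree subsum of `X`, i.e. `Y` is an
inner tree sum of the family `(Y ∩ X_i)` (indexed by those `i` with `Y ∩ X_i ≠ ∅`);
(ii) the induced subgraph `G_Y` of the gluing graph is connected; (iii) `q_i[Y] = Y ∩ X_i`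
for every `i` with `Y ∩ X_i ≠ ∅`. -/
theorem stmt_12 {X I : Type*} [TopologicalSpace X] (F : I → Set X)
    (h : IsTreeSumOf F)
    (q : ∀ i : I, X → F i)
    (hq : ∀ i : I, (∀ y : F i, q i (y : X) = y) ∧
      ∀ j : I, j ≠ i → ∃ c : F i, ∀ y : F j, q i (y : X) = c)
    (Y : Set X) (hY : Y.Nonempty) :
    (IsTreeSumOf (fun p : {i : I // (Y ∩ F i).Nonempty} =>
        ((fun y : Y => (y : X)) ⁻¹' F p.1)) ↔
      ((gluingGraph F).induce
        {v : I ⊕ ↥(gluingPoints F) |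
          Sum.elim (fun i => (Y ∩ F i).Nonempty) (fun s => (s : X) ∈ Y) v}).Connected) ∧
    (((gluingGraph F).induce
        {v : I ⊕ ↥(gluingPoints F) |
          Sum.elim (fun i => (Y ∩ F i).Nonempty) (fun s => (s : X) ∈ Y) v}).Connected ↔
      ∀ i : I, (Y ∩ F i).Nonempty → q i '' Y = {y : F i | (y : X) ∈ Y}) := by
  constructor
  · constructor
    · intro hts
      exact (Stmt12.graphIso F Y).connected_iff.mp hts.2.2.isConnected
    · intro hconn
      refine ⟨?_, ?_, ?_⟩
      · intro y
        obtain ⟨i, hi⟩ := h.1 (y : X)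
        exact ⟨⟨i, ⟨(y : X), y.2, hi⟩⟩, hi⟩
      · intro U
        constructor
        · intro hUo p
          exact hUo.preimage continuous_subtype_val
        · intro hU
          exact Stmt12.open_of_traces h hconn U hU
      · exact (SimpleGraph.isTree_iff _).mpr
          ⟨(Stmt12.graphIso F Y).connected_iff.mpr hconn, Stmt12.Fsub_acyclic F Y h⟩
  · constructor
    · intro hconn
      exact Stmt12.conn_to_iii q hq Y h hconn
    · intro hiii
      exact Stmt12.iii_to_conn q hq Y h hY hiii
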